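/- The cyclic group ℤ₃ has no 2-partite oriented semiregular representation: there is no oriented graph Γ whose automorphism group is isomorphic to ℤ₃ and acts semiregularly on V(Γ) with exactly two orbits forming a bipartition of Γ. -/
import Mathlib

def autSubgroup {V : Type*} (Arc : V → V → Prop) : Subgroup (Equiv.Perm V) where
  carrier := {σ | ∀ u v, Arc u v ↔ Arc (σ u) (σ v)}
  one_mem' := fun _ _ => Iff.rfl
  mul_mem' := by
    intro σ τ hσ hτ u v
    simpa using (hτ u v).trans (hσ (τ u) (τ v))
  inv_mem' := by
    intro σ hσ u v
    simpa using (hσ (σ⁻¹ u) (σ⁻¹ v)).symm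

set_option maxHeartbeats 1000000 in
set_option synthInstance.maxHeartbeats 400000 in
set_option synthInstance.maxSize 512 in
lemma zmod3_key (t₁ t₂ : ZMod 3 → Bool)
    (h : ∀ k, t₁ k = true → t₂ (-k) = false) :
    (∃ d : ZMod 3, (∀ k, t₁ k = t₁ (d - k)) ∧ (∀ k, t₂ k = t₂ (-d - k))) ∨
    (∃ s t : ZMod 3, (∀ k, t₁ k = true ↔ k = s) ∧ (∀ k, t₂ k = true ↔ k = t)) := by
  revert h; revert t₂; revert t₁; decide

theorem stmt_12 :
    ¬ ∃ (V : Type) (_ : Fintype V) (Arc : V → V → Prop) (B : Set V),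
      (∀ v, ¬ Arc v v) ∧
      (∀ u v, Arc u v → ¬ Arc v u) ∧
      Nonempty (autSubgroup Arc ≃* Multiplicative (ZMod 3)) ∧
      (∀ σ ∈ autSubgroup Arc, (∃ v, σ v = v) → σ = 1) ∧
      (∀ σ ∈ autSubgroup Arc, ∀ v ∈ B, σ v ∈ B) ∧
      (∀ u ∈ B, ∀ v ∈ B, ∃ σ ∈ autSubgroup Arc, σ u = v) ∧
      (∀ u ∈ Bᶜ, ∀ v ∈ Bᶜ, ∃ σ ∈ autSubgroup Arc, σ u = v) ∧
      B.Nonempty ∧ Bᶜ.Nonempty ∧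
      (∀ u v, Arc u v → ((u ∈ B ∧ v ∈ Bᶜ) ∨ (u ∈ Bᶜ ∧ v ∈ B))) := by
  classical
  rintro ⟨V, _, Arc, B, h1, h2, ⟨iso⟩, h4, h5, h6, h7, ⟨b, hb⟩, ⟨c, hc⟩, h10⟩
  -- the action of ZMod 3 on V through the isomorphism
  set e : ZMod 3 → Equiv.Perm V :=
    fun i => ((iso.symm (Multiplicative.ofAdd i) : autSubgroup Arc) : Equiv.Perm V) with he_def
  have he_mem : ∀ i, e i ∈ autSubgroup Arc := fun i => (iso.symm (Multiplicative.ofAdd i)).2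
  have hAut : ∀ i u v, Arc u v ↔ Arc (e i u) (e i v) := fun i => he_mem i
  have he_add : ∀ i j v, e (i + j) v = e i (e j v) := by
    intro i j v
    have h : iso.symm (Multiplicative.ofAdd (i + j))
        = iso.symm (Multiplicative.ofAdd i) * iso.symm (Multiplicative.ofAdd j) := by
      rw [← map_mul]; rfl
    simp only [he_def, h]
    rfl
  have he_zero : ∀ v, e 0 v = v := by
    intro v
    have h : iso.symm (Multiplicative.ofAdd (0 : ZMod 3)) = 1 := by
      rw [show Multiplicative.ofAdd (0 : ZMod 3) = 1 from rfl, map_one]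
    simp only [he_def, h]
    rfl
  -- semiregularity in coordinates
  have hfix : ∀ (i : ZMod 3) (v : V), e i v = v → i = 0 := by
    intro i v h
    have h1' : e i = 1 := h4 (e i) (he_mem i) ⟨v, h⟩
    have h2' : iso.symm (Multiplicative.ofAdd i) = 1 := by
      apply Subtype.ext; exact h1'
    have h3' : Multiplicative.ofAdd i = 1 := by
      have := congrArg iso h2'
      simpa using this
    simpa using congrArg Multiplicative.toAdd h3'
  -- orbit membership
  have hbB : ∀ i, e i b ∈ B := fun i => h5 (e i) (he_mem i) b hb
  have hBc : ∀ i (v : V), v ∈ Bᶜ → e i v ∈ Bᶜ := by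
    intro i v hv hmem
    apply hv
    have h' := h5 (e (-i)) (he_mem (-i)) _ hmem
    rwa [← he_add, neg_add_cancel, he_zero] at h'
  have hcC : ∀ i, e i c ∈ Bᶜ := fun i => hBc i c hc
  -- the labeling map
  set φf : ZMod 3 ⊕ ZMod 3 → V := Sum.elim (fun i => e i b) (fun i => e i c) with hφf
  have hcancel : ∀ (i j : ZMod 3) (v : V), e i v = e j v → i = j := by
    intro i j v h
    have h' : e (-j + i) v = v := by
      rw [he_add, h, ← he_add, neg_add_cancel, he_zero]
    have := hfix _ _ h'
    linear_combination this
  have hinj : Function.Injective φf := by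
    rintro (i | i) (j | j) h <;> simp only [hφf, Sum.elim_inl, Sum.elim_inr] at h
    · exact congrArg Sum.inl (hcancel i j b h)
    · exact absurd (hbB i) (h ▸ hcC j)
    · exact absurd (hbB j) (h ▸ hcC i)
    · exact congrArg Sum.inr (hcancel i j c h)
  have hsurjaut : ∀ σ ∈ autSubgroup Arc, ∃ i : ZMod 3, e i = σ := by
    intro σ hσ
    refine ⟨Multiplicative.toAdd (iso ⟨σ, hσ⟩), ?_⟩
    simp only [he_def]
    rw [show Multiplicative.ofAdd (Multiplicative.toAdd (iso ⟨σ, hσ⟩)) = iso ⟨σ, hσ⟩ from rfl,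
      MulEquiv.symm_apply_apply]
  have hsurj : Function.Surjective φf := by
    intro v
    by_cases hv : v ∈ B
    · obtain ⟨σ, hσ, hσb⟩ := h6 b hb v hv
      obtain ⟨i, hi⟩ := hsurjaut σ hσ
      exact ⟨Sum.inl i, by simp [hφf, hi, hσb]⟩
    · obtain ⟨σ, hσ, hσc⟩ := h7 c hc v hv
      obtain ⟨i, hi⟩ := hsurjaut σ hσ
      exact ⟨Sum.inr i, by simp [hφf, hi, hσc]⟩
  set Φ : (ZMod 3 ⊕ ZMod 3) ≃ V := Equiv.ofBijective φf ⟨hinj, hsurj⟩ with hΦ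
  have hΦl : ∀ i, Φ (Sum.inl i) = e i b := fun i => rfl
  have hΦr : ∀ i, Φ (Sum.inr i) = e i c := fun i => rfl
  -- arc structure in coordinates
  have hA1 : ∀ i j, Arc (e i b) (e j c) ↔ Arc b (e (j - i) c) := by
    intro i j
    rw [hAut (-i) (e i b) (e j c), ← he_add, ← he_add, neg_add_cancel, he_zero,
      show -i + j = j - i by ring]
  have hA2 : ∀ i j, Arc (e i c) (e j b) ↔ Arc c (e (j - i) b) := by
    intro i j
    rw [hAut (-i) (e i c) (e j b), ← he_add, ← he_add, neg_add_cancel, he_zero,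
      show -i + j = j - i by ring]
  have hnBB : ∀ i j, ¬ Arc (e i b) (e j b) := by
    intro i j h
    rcases h10 _ _ h with ⟨_, h'⟩ | ⟨h', _⟩
    · exact h' (hbB j)
    · exact h' (hbB i)
  have hnCC : ∀ i j, ¬ Arc (e i c) (e j c) := by
    intro i j h
    rcases h10 _ _ h with ⟨h', _⟩ | ⟨_, h'⟩
    · exact (hcC i) h'
    · exact (hcC j) h'
  -- connection sets
  set t₁ : ZMod 3 → Bool := fun k => decide (Arc b (e k c)) with ht₁def
  set t₂ : ZMod 3 → Bool := fun k => decide (Arc c (e k b)) with ht₂def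
  have ht₁ : ∀ k, t₁ k = true ↔ Arc b (e k c) := fun k => by simp [ht₁def]
  have ht₂ : ∀ k, t₂ k = true ↔ Arc c (e k b) := fun k => by simp [ht₂def]
  have horient : ∀ k, t₁ k = true → t₂ (-k) = false := by
    intro k hk
    rw [ht₁] at hk
    rw [Bool.eq_false_iff]
    intro h'
    rw [ht₂] at h'
    have harc : Arc (e k c) b := by
      have := (hA2 k 0).mpr (by rwa [zero_sub])
      rwa [he_zero] at this
    exact h2 _ _ hk harc
  rcases zmod3_key t₁ t₂ horient with ⟨d, hd₁, hd₂⟩ | ⟨s, t, hs, ht⟩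
  · -- reflection case: an automorphism with a fixed point that is not the identity
    have hp₁ : ∀ k, Arc b (e k c) ↔ Arc b (e (d - k) c) := by
      intro k; rw [← ht₁, ← ht₁, hd₁]
    have hp₂ : ∀ k, Arc c (e k b) ↔ Arc c (e (-d - k) b) := by
      intro k; rw [← ht₂, ← ht₂, hd₂]
    set π : (ZMod 3 ⊕ ZMod 3) ≃ (ZMod 3 ⊕ ZMod 3) :=
      ⟨Sum.elim (fun i => .inl (-i)) (fun i => .inr (d - i)),
       Sum.elim (fun i => .inl (-i)) (fun i => .inr (d - i)),
       by rintro (i | i) <;> simp,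
       by rintro (i | i) <;> simp⟩ with hπ
    set Τ : Equiv.Perm V := (Φ.symm.trans π).trans Φ with hΤ
    have hTΦ : ∀ x, Τ (Φ x) = Φ (π x) := by
      intro x; simp [hΤ]
    have hmem : Τ ∈ autSubgroup Arc := by
      intro u v
      rw [← Φ.apply_symm_apply u, ← Φ.apply_symm_apply v]
      rw [hTΦ, hTΦ]
      rcases Φ.symm u with i | i <;> rcases Φ.symm v with j | j <;>
        simp only [hπ, Equiv.coe_fn_mk, Sum.elim_inl, Sum.elim_inr, hΦl, hΦr]
      · exact iff_of_false (hnBB _ _) (hnBB _ _)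
      · rw [hA1, hA1, show d - j - -i = d - (j - i) by ring]; exact hp₁ (j - i)
      · rw [hA2, hA2, show -j - (d - i) = -d - (j - i) by ring]; exact hp₂ (j - i)
      · exact iff_of_false (hnCC _ _) (hnCC _ _)
    have hfixT : Τ (Φ (Sum.inl 0)) = Φ (Sum.inl 0) := by
      rw [hTΦ]
      simp [hπ]
    have hT1 : Τ = 1 := h4 Τ hmem ⟨Φ (Sum.inl 0), hfixT⟩
    have : Φ (Sum.inl (-1 : ZMod 3)) = Φ (Sum.inl 1) := by
      have := hTΦ (Sum.inl 1)
      rw [hT1] at this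
      simp only [Equiv.Perm.coe_one, id_eq] at this
      exact this.symm
    have h1eq : (-1 : ZMod 3) = 1 := by
      have := Φ.injective this
      simpa using this
    exact absurd h1eq (by decide)
  · -- swap case: an automorphism exchanging the two sides
    have hp₁ : ∀ k, Arc b (e k c) ↔ k = s := fun k => (ht₁ k).symm.trans (hs k)
    have hp₂ : ∀ k, Arc c (e k b) ↔ k = t := fun k => (ht₂ k).symm.trans (ht k)
    set π : (ZMod 3 ⊕ ZMod 3) ≃ (ZMod 3 ⊕ ZMod 3) :=
      ⟨Sum.elim (fun i => .inr (i + s)) (fun i => .inl (i + t)),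
       Sum.elim (fun i => .inr (i - t)) (fun i => .inl (i - s)),
       by rintro (i | i) <;> simp,
       by rintro (i | i) <;> simp⟩ with hπ
    set Τ : Equiv.Perm V := (Φ.symm.trans π).trans Φ with hΤ
    have hTΦ : ∀ x, Τ (Φ x) = Φ (π x) := by
      intro x; simp [hΤ]
    have hmem : Τ ∈ autSubgroup Arc := by
      intro u v
      rw [← Φ.apply_symm_apply u, ← Φ.apply_symm_apply v]
      rw [hTΦ, hTΦ]
      rcases Φ.symm u with i | i <;> rcases Φ.symm v with j | j <;>
        simp only [hπ, Equiv.coe_fn_mk, Sum.elim_inl, Sum.elim_inr, hΦl, hΦr]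
      · exact iff_of_false (hnBB _ _) (hnCC _ _)
      · rw [hA1, hA2, hp₁, hp₂]
        constructor <;> intro h <;> linear_combination h
      · rw [hA2, hA1, hp₂, hp₁]
        constructor <;> intro h <;> linear_combination h
      · exact iff_of_false (hnCC _ _) (hnBB _ _)
    have hBmem : Τ (Φ (Sum.inl 0)) ∈ B := h5 Τ hmem _ (by rw [hΦl]; exact hbB 0)
    have hCmem : Τ (Φ (Sum.inl 0)) ∈ Bᶜ := by
      rw [hTΦ]
      simp only [hπ, Equiv.coe_fn_mk, Sum.elim_inl]
      rw [hΦr]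
      exact hcC _
    exact hCmem hBmem
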